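/- Let A_{ij} be abelian groups for 0 ≤ i < j ≤ 4 with (i, j) ≠ (1, 3), and let μ_{ijk} : A_{ij} × A_{jk} → A_{ik} be biadditive maps for (i, j, k) ∈ {(0,1,2), (0,2,3), (0,3,4), (0,1,4), (1,2,4), (2,3,4)}. Suppose that A_{02} is generated by the elements μ_{012}(a, b) (a ∈ A_{01}, b ∈ A_{12}), that A_{24} is generated by the elements μ_{234}(c, d) (c ∈ A_{23}, d ∈ A_{34}), and that μ_{014}(a, μ_{124}(b, μ_{234}(c, d))) = μ_{034}(μ_{023}(μ_{012}(a, b), c), d) for all a ∈ A_{01}, b ∈ A_{12}, c ∈ A_{23}, d ∈ A_{34}. Then there is a unique biadditive map μ_{024} : A_{02} × A_{24} → A_{04} such that μ_{024}(μ_{012}(a, b), c) = μ_{014}(a, μ_{124}(b, c)) and μ_{034}(μ_{023}(x, c), d) = μ_{024}(x, μ_{234}(c, d)) for all appropriate arguments. -/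

import Mathlib

private lemma aux_zero' {α γ : Type} [AddZeroClass α] [AddGroup γ] (f : α → γ)
    (h : ∀ a a', f (a + a') = f a + f a') : f 0 = 0 := by
  have := h 0 0
  rw [add_zero] at this
  exact (left_eq_add.mp this)

private lemma aux_neg' {α γ : Type} [AddGroup α] [AddGroup γ] (f : α → γ)
    (h : ∀ a a', f (a + a') = f a + f a') : ∀ a, f (-a) = - f a := by
  intro a
  have h0 : f 0 = 0 := aux_zero' f h
  have := h a (-a)
  rw [add_neg_cancel, h0] at this
  exact (neg_eq_of_add_eq_zero_right this.symm).symm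

/-- Lemma `mul-cons`. -/
theorem statement11 {A01 A02 A03 A04 A12 A14 A23 A24 A34 : Type}
    [AddCommGroup A01] [AddCommGroup A02] [AddCommGroup A03] [AddCommGroup A04]
    [AddCommGroup A12] [AddCommGroup A14] [AddCommGroup A23] [AddCommGroup A24]
    [AddCommGroup A34]
    (μ012 : A01 → A12 → A02) (μ023 : A02 → A23 → A03) (μ034 : A03 → A34 → A04)
    (μ014 : A01 → A14 → A04) (μ124 : A12 → A24 → A14) (μ234 : A23 → A34 → A24)
    (h012l : ∀ a a' b, μ012 (a + a') b = μ012 a b + μ012 a' b)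
    (h012r : ∀ a b b', μ012 a (b + b') = μ012 a b + μ012 a b')
    (h023l : ∀ a a' b, μ023 (a + a') b = μ023 a b + μ023 a' b)
    (h023r : ∀ a b b', μ023 a (b + b') = μ023 a b + μ023 a b')
    (h034l : ∀ a a' b, μ034 (a + a') b = μ034 a b + μ034 a' b)
    (h034r : ∀ a b b', μ034 a (b + b') = μ034 a b + μ034 a b')
    (h014l : ∀ a a' b, μ014 (a + a') b = μ014 a b + μ014 a' b)
    (h014r : ∀ a b b', μ014 a (b + b') = μ014 a b + μ014 a b')
    (h124l : ∀ a a' b, μ124 (a + a') b = μ124 a b + μ124 a' b)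
    (h124r : ∀ a b b', μ124 a (b + b') = μ124 a b + μ124 a b')
    (h234l : ∀ a a' b, μ234 (a + a') b = μ234 a b + μ234 a' b)
    (h234r : ∀ a b b', μ234 a (b + b') = μ234 a b + μ234 a b')
    (hgen02 : AddSubgroup.closure {x : A02 | ∃ a b, x = μ012 a b} = ⊤)
    (hgen24 : AddSubgroup.closure {x : A24 | ∃ c d, x = μ234 c d} = ⊤)
    (hassoc : ∀ a b c d,
      μ014 a (μ124 b (μ234 c d)) = μ034 (μ023 (μ012 a b) c) d) :
    ∃! μ024 : A02 → A24 → A04,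
      (∀ x x' y, μ024 (x + x') y = μ024 x y + μ024 x' y) ∧
      (∀ x y y', μ024 x (y + y') = μ024 x y + μ024 x y') ∧
      (∀ a b c, μ024 (μ012 a b) c = μ014 a (μ124 b c)) ∧
      (∀ x c d, μ034 (μ023 x c) d = μ024 x (μ234 c d)) := by
  -- zero/neg lemmas for the bilinear maps we need
  have z023l : ∀ c, μ023 0 c = 0 := fun c => aux_zero' (fun x => μ023 x c) (fun a a' => h023l a a' c)
  have n023l : ∀ x c, μ023 (-x) c = - μ023 x c :=
    fun x c => aux_neg' (fun x => μ023 x c) (fun a a' => h023l a a' c) x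
  have z034l : ∀ d, μ034 0 d = 0 := fun d => aux_zero' (fun x => μ034 x d) (fun a a' => h034l a a' d)
  have n034l : ∀ x d, μ034 (-x) d = - μ034 x d :=
    fun x d => aux_neg' (fun x => μ034 x d) (fun a a' => h034l a a' d) x
  -- uniqueness of homs A24 →+ A04 determined on generators
  have key : ∀ (f g : A24 →+ A04), (∀ c d, f (μ234 c d) = g (μ234 c d)) → f = g := by
    intro f g h
    ext y
    have hy : y ∈ AddSubgroup.closure {x : A24 | ∃ c d, x = μ234 c d} := by
      rw [hgen24]; trivial
    induction hy using AddSubgroup.closure_induction with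
    | mem z hz => obtain ⟨c, d, rfl⟩ := hz; exact h c d
    | zero => simp
    | add z w _ _ hz hw => simp [map_add, hz, hw]
    | neg z _ hz => simp [map_neg, hz]
  -- existence of a hom for each x
  have exist : ∀ x : A02, ∃ f : A24 →+ A04, ∀ c d, f (μ234 c d) = μ034 (μ023 x c) d := by
    intro x
    have hx : x ∈ AddSubgroup.closure {x : A02 | ∃ a b, x = μ012 a b} := by
      rw [hgen02]; trivial
    induction hx using AddSubgroup.closure_induction with
    | mem z hz =>
      obtain ⟨a, b, rfl⟩ := hz
      refine ⟨AddMonoidHom.mk' (fun y => μ014 a (μ124 b y)) (fun y y' => by show μ014 a (μ124 b (y + y')) = μ014 a (μ124 b y) + μ014 a (μ124 b y'); rw [h124r, h014r]),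
        fun c d => ?_⟩
      exact hassoc a b c d
    | zero => exact ⟨0, fun c d => by simp [z023l, z034l]⟩
    | add z w _ _ hz hw =>
      obtain ⟨f, hf⟩ := hz
      obtain ⟨g, hg⟩ := hw
      exact ⟨f + g, fun c d => by
        simp only [AddMonoidHom.add_apply, hf, hg, h023l, h034l]⟩
    | neg z _ hz =>
      obtain ⟨f, hf⟩ := hz
      exact ⟨-f, fun c d => by
        simp only [AddMonoidHom.neg_apply, hf, n023l, n034l]⟩
  choose F hF using exist
  refine ⟨fun x y => F x y, ⟨?_, ?_, ?_, ?_⟩, ?_⟩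
  · -- additivity in x
    intro x x' y
    have : F (x + x') = F x + F x' := by
      apply key
      intro c d
      simp only [AddMonoidHom.add_apply, hF, h023l, h034l]
    show F (x + x') y = F x y + F x' y
    rw [this]; rfl
  · intro x y y'; exact map_add (F x) y y'
  · -- compatibility with μ012
    intro a b c
    have : F (μ012 a b) =
        AddMonoidHom.mk' (fun y => μ014 a (μ124 b y)) (fun y y' => by show μ014 a (μ124 b (y + y')) = μ014 a (μ124 b y) + μ014 a (μ124 b y'); rw [h124r, h014r]) := by
      apply key
      intro c d
      simpa using (hF (μ012 a b) c d).trans (hassoc a b c d).symm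
    exact congrArg (fun f => f c) this
  · intro x c d; exact (hF x c d).symm
  · -- uniqueness
    rintro ν ⟨hν1, hν2, hν3, hν4⟩
    funext x y
    have : AddMonoidHom.mk' (fun y => ν x y) (fun y y' => hν2 x y y') = F x := by
      apply key
      intro c d
      exact (hν4 x c d).symm.trans (hF x c d).symm
    exact congrArg (fun f => f y) this
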